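/- Let 0 < q < 1, set r := 2/(1-q) (so r > 2), Ω := (0,π), a(x) := r^{1-2/r}(1 - r cos²x), and u(x) := sin^r(x)/r. Then u is twice continuously differentiable on [0,π], u > 0 on (0,π), u(0) = u(π) = 0, u'(0) = u'(π) = 0, and -u''(x) = a(x) u(x)^q for all x ∈ (0,π). -/

import Mathlib

open Real Set

theorem stmt_0 (q : ℝ) (hq0 : 0 < q) (hq1 : q < 1)
    (r : ℝ) (hr : r = 2 / (1 - q))
    (a u : ℝ → ℝ)
    (ha : ∀ x, a x = r ^ (1 - 2 / r) * (1 - r * (Real.cos x) ^ 2))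
    (hu : ∀ x, u x = (Real.sin x) ^ r / r) :
    ContDiffOn ℝ 2 u (Icc 0 π) ∧
    (∀ x ∈ Ioo 0 π, 0 < u x) ∧
    u 0 = 0 ∧ u π = 0 ∧
    deriv u 0 = 0 ∧ deriv u π = 0 ∧
    ∀ x ∈ Ioo 0 π, -deriv (deriv u) x = a x * (u x) ^ q := by
  have h1q : 0 < 1 - q := by linarith
  have hr2 : 2 < r := by
    rw [hr]
    rw [lt_div_iff₀ h1q]; nlinarith
  have hr0 : 0 < r := by linarith
  have hrq : r * q = r - 2 := by
    rw [hr]; field_simp; ring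
  have h2r : 2 / r = 1 - q := by
    rw [hr]; field_simp
  -- first derivative
  have hd1 : ∀ x : ℝ, HasDerivAt u (Real.sin x ^ (r - 1) * Real.cos x) x := by
    intro x
    have h := (Real.hasDerivAt_rpow_const (x := Real.sin x) (p := r)
      (Or.inr (by linarith))).comp x (Real.hasDerivAt_sin x)
    have h2 := h.div_const r
    have hfun : u = fun y => Real.sin y ^ r / r := funext hu
    rw [hfun]
    exact h2.congr_deriv (by rw [mul_assoc, mul_div_cancel_left₀ _ hr0.ne'])
  -- second derivative
  set g : ℝ → ℝ := fun x => (r - 1) * Real.sin x ^ (r - 1 - 1) * Real.cos x * Real.cos x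
      + Real.sin x ^ (r - 1) * (-Real.sin x) with hg
  have hd2 : ∀ x : ℝ, HasDerivAt (fun y => Real.sin y ^ (r - 1) * Real.cos y) (g x) x := by
    intro x
    have h1 := (Real.hasDerivAt_rpow_const (x := Real.sin x) (p := r - 1)
      (Or.inr (by linarith))).comp x (Real.hasDerivAt_sin x)
    have h2 := h1.mul (Real.hasDerivAt_cos x)
    exact h2.congr_deriv (by simp only [hg, Function.comp])
  have hderivu : deriv u = fun x => Real.sin x ^ (r - 1) * Real.cos x :=
    funext fun x => (hd1 x).deriv
  have hderiv2 : deriv (deriv u) = g := by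
    rw [hderivu]; exact funext fun x => (hd2 x).deriv
  have hgcont : Continuous g := by
    have c1 : Continuous fun x => Real.sin x ^ (r - 1 - 1) :=
      (Real.continuous_rpow_const (by linarith)).comp Real.continuous_sin
    have c2 : Continuous fun x => Real.sin x ^ (r - 1) :=
      (Real.continuous_rpow_const (by linarith)).comp Real.continuous_sin
    rw [hg]
    continuity
  have hC2 : ContDiff ℝ 2 u := by
    rw [show (2 : WithTop ℕ∞) = 1 + 1 from rfl, contDiff_succ_iff_deriv]
    refine ⟨fun x => (hd1 x).differentiableAt, by simp, ?_⟩
    rw [contDiff_one_iff_deriv]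
    exact ⟨fun x => by rw [hderivu]; exact (hd2 x).differentiableAt,
      by rw [hderiv2]; exact hgcont⟩
  refine ⟨hC2.contDiffOn, ?_, ?_, ?_, ?_, ?_, ?_⟩
  · intro x hx
    have hs : 0 < Real.sin x := Real.sin_pos_of_pos_of_lt_pi hx.1 hx.2
    rw [hu x]
    exact div_pos (Real.rpow_pos_of_pos hs r) hr0
  · rw [hu 0]; simp [Real.zero_rpow (ne_of_gt hr0)]
  · rw [hu π]; simp [Real.zero_rpow (ne_of_gt hr0)]
  · rw [hderivu]
    simp [Real.zero_rpow (show r - 1 ≠ 0 by intro h; rw [sub_eq_zero] at h; linarith)]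
  · rw [hderivu]
    simp [Real.zero_rpow (show r - 1 ≠ 0 by intro h; rw [sub_eq_zero] at h; linarith)]
  · intro x hx
    have hs : 0 < Real.sin x := Real.sin_pos_of_pos_of_lt_pi hx.1 hx.2
    rw [hderiv2, hg, ha x, hu x]
    have hexp : 1 - 2 / r = q := by rw [h2r]; ring
    have e2 : r - 1 - 1 = r - 2 := by ring
    have e1 : Real.sin x ^ (r - 1) = Real.sin x ^ (r - 2) * Real.sin x := by
      rw [show r - 1 = (r - 2) + 1 by ring, Real.rpow_add_one hs.ne']
    have hdiv : (Real.sin x ^ r / r) ^ q = Real.sin x ^ (r - 2) / r ^ q := by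
      rw [Real.div_rpow (Real.rpow_nonneg hs.le r) hr0.le, ← Real.rpow_mul hs.le, hrq]
    have hrq0 : r ^ q ≠ 0 := ne_of_gt (Real.rpow_pos_of_pos hr0 q)
    simp only [e2, e1, hdiv, hexp]
    have hA : r ^ q * (1 - r * Real.cos x ^ 2) * (Real.sin x ^ (r - 2) / r ^ q)
        = Real.sin x ^ (r - 2) * (1 - r * Real.cos x ^ 2) := by
      field_simp
    rw [hA]
    linear_combination (Real.sin x ^ (r - 2)) * (Real.sin_sq_add_cos_sq x)
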